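/- Let p be a prime and G a finite nonabelian p-group. Let Z₂*(G) = {a ∈ Z₂(G) : a^p ∈ Z(G)}, and assume the class of G is at most p. Then Z₂*(G) ≤ C_G(Φ(G)). -/

import Mathlib

section Aux

variable {G : Type*} [Group G]

/-- If `c = ⁅a,g⁆` is central, then `a * g^n * a⁻¹ = c^n * g^n`. -/
lemma aux_conj_pow (a g : G) (hc : ∀ b : G, (a * g * a⁻¹ * g⁻¹) * b = b * (a * g * a⁻¹ * g⁻¹)) :
    ∀ n : ℕ, a * g ^ n * a⁻¹ = (a * g * a⁻¹ * g⁻¹) ^ n * g ^ n := by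
  intro n
  induction n with
  | zero => group
  | succ n ih =>
    set c := a * g * a⁻¹ * g⁻¹ with hcdef
    have : a * g ^ (n + 1) * a⁻¹ = (a * g ^ n * a⁻¹) * (a * g * a⁻¹) := by group
    rw [this, ih]
    have hag : a * g * a⁻¹ = c * g := by rw [hcdef]; group
    rw [hag]
    calc c ^ n * g ^ n * (c * g) = c ^ n * (g ^ n * c) * g := by group
      _ = c ^ n * (c * g ^ n) * g := by rw [← hc (g ^ n)]
      _ = c ^ (n + 1) * g ^ (n + 1) := by rw [pow_succ, pow_succ]; group

/-- If `c = ⁅a,g⁆` is central, then `a^n * g * a⁻ⁿ = c^n * g`. -/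
lemma aux_pow_conj (a g : G) (hc : ∀ b : G, (a * g * a⁻¹ * g⁻¹) * b = b * (a * g * a⁻¹ * g⁻¹)) :
    ∀ n : ℕ, a ^ n * g * (a ^ n)⁻¹ = (a * g * a⁻¹ * g⁻¹) ^ n * g := by
  intro n
  induction n with
  | zero => group
  | succ n ih =>
    set c := a * g * a⁻¹ * g⁻¹ with hcdef
    have : a ^ (n + 1) * g * (a ^ (n + 1))⁻¹ = a * (a ^ n * g * (a ^ n)⁻¹) * a⁻¹ := by
      rw [pow_succ']; group
    rw [this, ih]
    have hca' : c ^ n * a = a * c ^ n := Commute.pow_left (hc a) n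
    calc a * (c ^ n * g) * a⁻¹ = (a * c ^ n) * (g * a⁻¹) := by group
      _ = (c ^ n * a) * (g * a⁻¹) := by rw [← hca']
      _ = c ^ n * (a * g * a⁻¹) := by group
      _ = c ^ n * (c * g) := by rw [show a * g * a⁻¹ = c * g by rw [hcdef]; group]
      _ = c ^ (n + 1) * g := by rw [pow_succ]; group

end Aux

open scoped commutatorElement

/-- Let `p` be a prime and `G` a finite nonabelian `p`-group of
nilpotency class at most `p`.  Let `Z₂*(G) = {a ∈ Z₂(G) : a^p ∈ Z(G)}`.
Then `Z₂*(G) ≤ C_G(Φ(G))`, where `Φ(G)` is the Frattini subgroup. -/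
theorem stmt6 {p : ℕ} [Fact p.Prime] {G : Type*} [Group G] [Finite G]
    (hG : IsPGroup p G) (hna : ¬ ∀ a b : G, a * b = b * a)
    [Group.IsNilpotent G] (hclass : Group.nilpotencyClass G ≤ p) :
    ∀ a ∈ upperCentralSeries G 2, a ^ p ∈ Subgroup.center G →
      a ∈ Subgroup.centralizer ((frattini G : Subgroup G) : Set G) := by
  intro a ha hap
  -- `K` is the centralizer of `a`.
  set K : Subgroup G := Subgroup.centralizer {a} with hKdef
  -- Step 1: every commutator of `a` with anything is central.
  have hZ : ∀ g : G, a * g * a⁻¹ * g⁻¹ ∈ Subgroup.center G := by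
    intro g
    have := (mem_upperCentralSeries_succ_iff (n := 1)).mp ha g
    rwa [upperCentralSeries_one] at this
  -- Step 2 (three subgroups lemma): `a` commutes with every commutator.
  have hcommutators : ∀ g h : G, ⁅g, h⁆ * a = a * ⁅g, h⁆ := by
    set Z2 : Subgroup G := upperCentralSeries G 2 with hZ2
    have hle : ⁅Z2, (⊤ : Subgroup G)⁆ ≤ Subgroup.center G := by
      rw [Subgroup.commutator_le]
      intro z hz g _
      have := (mem_upperCentralSeries_succ_iff (n := 1)).mp hz g
      rwa [upperCentralSeries_one] at this
    have h1 : ⁅⁅Z2, (⊤ : Subgroup G)⁆, (⊤ : Subgroup G)⁆ = ⊥ := by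
      rw [eq_bot_iff, Subgroup.commutator_le]
      intro c hc g _
      have hcen : c ∈ Subgroup.center G := hle hc
      have hcg : g * c = c * g := Subgroup.mem_center_iff.mp hcen g
      show ⁅c, g⁆ ∈ (⊥ : Subgroup G)
      rw [Subgroup.mem_bot, commutatorElement_def, ← hcg]
      group
    have h2 : ⁅⁅(⊤ : Subgroup G), Z2⁆, (⊤ : Subgroup G)⁆ = ⊥ := by
      rwa [Subgroup.commutator_comm (⊤ : Subgroup G) Z2]
    have h3 : ⁅⁅(⊤ : Subgroup G), (⊤ : Subgroup G)⁆, Z2⁆ = ⊥ :=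
      Subgroup.commutator_commutator_eq_bot_of_rotate h2 h1
    intro g h
    have hm : ⁅⁅g, h⁆, a⁆ ∈ (⊥ : Subgroup G) := by
      rw [← h3]
      exact Subgroup.commutator_mem_commutator
        (Subgroup.commutator_mem_commutator (Subgroup.mem_top g) (Subgroup.mem_top h)) ha
    have : ⁅⁅g, h⁆, a⁆ = 1 := Subgroup.mem_bot.mp hm
    exact (commutatorElement_eq_one_iff_commute.mp this).eq
  -- Step 3: `a` commutes with every `p`-th power.
  have hpows : ∀ g : G, g ^ p * a = a * g ^ p := by
    intro g
    have hc : ∀ b : G, (a * g * a⁻¹ * g⁻¹) * b = b * (a * g * a⁻¹ * g⁻¹) := by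
      intro b
      exact (Subgroup.mem_center_iff.mp (hZ g) b).symm
    -- c^p = 1 since a^p is central
    have h1 : a ^ p * g * (a ^ p)⁻¹ = (a * g * a⁻¹ * g⁻¹) ^ p * g := aux_pow_conj a g hc p
    have h2 : a ^ p * g * (a ^ p)⁻¹ = g := by
      rw [← Subgroup.mem_center_iff.mp hap g]; group
    have hcp : (a * g * a⁻¹ * g⁻¹) ^ p = 1 :=
      mul_right_cancel (b := g) (by rw [one_mul]; exact h1.symm.trans h2)
    have h3 : a * g ^ p * a⁻¹ = g ^ p := by
      rw [aux_conj_pow a g hc p, hcp, one_mul]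
    calc g ^ p * a = (a * g ^ p * a⁻¹) * a := by rw [h3]
      _ = a * g ^ p := by group
  -- commutators and p-th powers lie in K
  have hK1 : ∀ g h : G, ⁅g, h⁆ ∈ K := by
    intro g h
    rw [hKdef, Subgroup.mem_centralizer_iff]
    rintro x rfl
    exact (hcommutators g h).symm
  have hK2 : ∀ g : G, g ^ p ∈ K := by
    intro g
    rw [hKdef, Subgroup.mem_centralizer_iff]
    rintro x rfl
    exact (hpows g).symm
  -- Step 4: frattini G ≤ K.
  rw [Subgroup.mem_centralizer_iff]
  intro h hh
  by_contra hcon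
  have hhK : h ∉ K := by
    intro hmem
    exact hcon (Subgroup.mem_centralizer_iff.mp hmem a rfl).symm
  -- find a subgroup M ⊇ K maximal with respect to not containing h
  have hSfin : {M : Subgroup G | K ≤ M ∧ h ∉ M}.Finite := Set.toFinite _
  have hSne : {M : Subgroup G | K ≤ M ∧ h ∉ M}.Nonempty := ⟨K, le_refl K, hhK⟩
  obtain ⟨M, ⟨hKM, hhM⟩, hMmax⟩ : ∃ M ∈ {M : Subgroup G | K ≤ M ∧ h ∉ M},
      ∀ M' ∈ {M : Subgroup G | K ≤ M ∧ h ∉ M}, id M ≤ id M' → id M = id M' := by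
    obtain ⟨M, hM, hmax⟩ := Set.Finite.exists_maximalFor id _ hSfin hSne
    exact ⟨M, hM, fun M' hM' hle => le_antisymm hle (hmax hM' hle)⟩
  simp only [id] at hMmax
  -- M is normal (contains all commutators)
  have hMnormal : M.Normal := by
    constructor
    intro n hn g
    have : g * n * g⁻¹ = n * ⁅n⁻¹, g⁆ := by rw [commutatorElement_def]; group
    rw [this]
    exact M.mul_mem hn (hKM (hK1 n⁻¹ g))
  -- key claim: M ⊔ zpowers h = ⊤
  have htop : M ⊔ Subgroup.zpowers h = ⊤ := by
    rw [eq_top_iff]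
    intro y _
    by_cases hy : y ∈ M
    · exact Subgroup.mem_sup_left hy
    -- the subgroup M ⊔ zpowers y strictly contains M, so it contains h
    have hhy : h ∈ M ⊔ Subgroup.zpowers y := by
      by_contra hcon2
      have hKle : K ≤ M ⊔ Subgroup.zpowers y := le_trans hKM le_sup_left
      have := hMmax (M ⊔ Subgroup.zpowers y) ⟨hKle, hcon2⟩ le_sup_left
      exact hy (this ▸ Subgroup.mem_sup_right (Subgroup.mem_zpowers y))
    -- write h = m * y^j
    have hset : (h : G) ∈ ((M ⊔ Subgroup.zpowers y : Subgroup G) : Set G) := hhy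
    rw [Subgroup.normal_mul M (Subgroup.zpowers y)] at hset
    obtain ⟨m, hm, z, hz, hmz⟩ := hset
    obtain ⟨j, rfl⟩ := hz
    have hyp : y ^ p ∈ M := hKM (hK2 y)
    -- j is not divisible by p
    have hjp : ¬ ((p : ℤ) ∣ j) := by
      rintro ⟨t, rfl⟩
      apply hhM
      rw [← hmz]
      apply M.mul_mem hm
      show y ^ ((p : ℤ) * t) ∈ M
      have : y ^ ((p : ℤ) * t) = (y ^ p) ^ t := by
        rw [zpow_mul, zpow_natCast]
      rw [this]
      exact Subgroup.zpow_mem M hyp t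
    -- choose u v with u*j + v*p = 1
    have hcop : IsCoprime j (p : ℤ) := by
      rw [Int.isCoprime_iff_gcd_eq_one]
      have hp : p.Prime := Fact.out
      have hnd : ¬ (p ∣ j.natAbs) := fun hd =>
        hjp ((Int.natCast_dvd_natCast.mpr hd).trans (Int.natAbs_dvd.mpr dvd_rfl))
      have hco : Nat.Coprime j.natAbs p := (hp.coprime_iff_not_dvd.mpr hnd).symm
      simpa [Int.gcd] using hco
    obtain ⟨u, v, huv⟩ := hcop
    -- y = (y^j)^u * (y^p)^v ∈ M ⊔ zpowers h
    have hyj : y ^ j ∈ M ⊔ Subgroup.zpowers h := by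
      have : y ^ j = m⁻¹ * h := by rw [← hmz]; group
      rw [this]
      exact Subgroup.mul_mem _ (Subgroup.mem_sup_left (M.inv_mem hm))
        (Subgroup.mem_sup_right (Subgroup.mem_zpowers h))
    have : y = (y ^ j) ^ u * (y ^ p) ^ v := by
      rw [← zpow_natCast y p, ← zpow_mul, ← zpow_mul, ← zpow_add,
        mul_comm j u, mul_comm ((p : ℤ)) v, huv, zpow_one]
    rw [this]
    exact Subgroup.mul_mem _ (Subgroup.zpow_mem _ hyj u)
      (Subgroup.zpow_mem _ (Subgroup.mem_sup_left hyp) v)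
  -- M is a coatom
  have hMco : IsCoatom M := by
    constructor
    · intro heq
      exact hhM (heq ▸ Subgroup.mem_top h)
    · intro H hMH
      have hhH : h ∈ H := by
        by_contra hcon2
        have hKH : K ≤ H := le_trans hKM hMH.le
        exact hMH.ne (hMmax H ⟨hKH, hcon2⟩ hMH.le)
      rw [eq_top_iff, ← htop, sup_le_iff]
      exact ⟨hMH.le, by rwa [Subgroup.zpowers_le]⟩
  exact hhM (frattini_le_coatom hMco hh)
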